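/- (NFE-1 learns antisymmetry rules.) Let n ∈ ℕ and r_μ, r_σ ∈ ℝⁿ with every entry of r_σ nonzero, and suppose r_σ ⊙ r_σ ≠ 1 or r_σ ⊙ r_μ + r_μ ≠ 0. Then for every h_μ ∈ ℝⁿ and every h_σ ∈ ℝⁿ with all entries nonzero, setting t_μ = r_σ ⊙ h_μ + r_μ and t_σ = r_σ ⊙ h_σ (so that the triplet (h, r, t) attains maximal score), it is NOT the case that both r_σ ⊙ t_μ + r_μ = h_μ and |r_σ ⊙ t_σ| = |h_σ| hold. -/
import Mathlib


open MeasureTheory ProbabilityTheory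
open scoped ENNReal NNReal

/-- NFE-1 learns antisymmetry rules: if r_σ ⊙ r_σ ≠ 1 or r_σ ⊙ r_μ + r_μ ≠ 0, then for a
triplet (h, r, t) attaining the maximal score (t_μ = r_σ ⊙ h_μ + r_μ, t_σ = r_σ ⊙ h_σ),
the reversed triplet (t, r, h) does not attain the maximal score. -/
theorem nfe1_antisymmetry (n : ℕ) (rμ rσ : Fin n → ℝ) (hrσ : ∀ i, rσ i ≠ 0)
    (h : rσ * rσ ≠ 1 ∨ rσ * rμ + rμ ≠ 0) :
    ∀ hμ hσ : Fin n → ℝ, (∀ i, hσ i ≠ 0) →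
      ¬(rσ * (rσ * hμ + rμ) + rμ = hμ ∧ |rσ * (rσ * hσ)| = |hσ|) := by
  intro hμ hσ hhσ ⟨h1, h2⟩
  have hsq : rσ * rσ = 1 := by
    funext i
    have e := congrFun h2 i
    simp only [Pi.abs_apply, Pi.mul_apply, Pi.one_apply, abs_mul] at e ⊢
    have habs : |hσ i| ≠ 0 := abs_ne_zero.mpr (hhσ i)
    have h3 : (|rσ i| * |rσ i| - 1) * |hσ i| = 0 := by linear_combination e
    rcases mul_eq_zero.mp h3 with h3 | h3
    · have := sub_eq_zero.mp h3
      calc rσ i * rσ i = |rσ i| * |rσ i| := (abs_mul_abs_self _).symm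
        _ = 1 := this
    · exact absurd h3 habs
  have hmu : rσ * rμ + rμ = 0 := by
    funext i
    have e := congrFun h1 i
    have s := congrFun hsq i
    simp only [Pi.mul_apply, Pi.add_apply, Pi.one_apply, Pi.zero_apply] at e s ⊢
    linear_combination e - hμ i * s
  rcases h with h | h
  · exact h hsq
  · exact h hmu
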